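/- Let p > 2 be a prime and n ≥ 0 an integer such that the residue a_0 of n+1 modulo p satisfies 1 < a_0 < p−1. Then, as multisets of positive integers, ext(n) = supp(n+1) + supp(n−1). -/

import Mathlib

/-- `suppP p n` : for `n ≥ 0`, writing `n+1` in base `p` as
`a_j p^j + ... + a_0`, the set of integers
`a_j p^j ± a_{j-1} p^{j-1} ± ... ± a_0` over all choices of signs on the
lower digits.  By convention `suppP p (-1) = ∅` (and also for `n < 0`). -/
def suppP (p : ℕ) (n : ℤ) : Finset ℤ :=
  if 0 ≤ n then
    let L := Nat.digits p (n.toNat + 1)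
    let j := L.length - 1
    Finset.image
      (fun ε : Fin j → Bool =>
        (L.getD j 0 : ℤ) * (p : ℤ) ^ j +
          ∑ i : Fin j, (if ε i then (1 : ℤ) else -1) * (L.getD i 0 : ℤ) * (p : ℤ) ^ (i : ℕ))
      Finset.univ
  else ∅

/-- `extP p n` : the multiset consisting of `x+1` for each `x ∈ suppP p n`,
together with `x-1` for each `x ∈ suppP p n` with `x ≥ 2` (occurrences of `0`
are discarded). -/
def extP (p : ℕ) (n : ℤ) : Multiset ℤ :=
  (suppP p n).val.map (fun x => x + 1) +
    ((suppP p n).val.filter (fun x => 2 ≤ x)).map (fun x => x - 1)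


def tfun (p : ℕ) (R : List ℕ) (k : ℕ) (δ : Fin k → Bool) : ℤ :=
  (R.getD k 0 : ℤ) * (p : ℤ) ^ (k + 1) +
    ∑ i : Fin k, (if δ i then (1 : ℤ) else -1) * (R.getD i 0 : ℤ) * (p : ℤ) ^ ((i : ℕ) + 1)

def Tset (p : ℕ) (R : List ℕ) (k : ℕ) : Finset ℤ :=
  Finset.image (tfun p R k) Finset.univ

def addEmb (c : ℤ) : ℤ ↪ ℤ := ⟨fun x => x + c, add_left_injective c⟩

lemma suppP_singleton (p : ℕ) (n : ℤ) (hn : 0 ≤ n) (c : ℕ)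
    (hL : Nat.digits p (n.toNat + 1) = [c]) : suppP p n = {(c : ℤ)} := by
  rw [suppP, if_pos hn, hL]
  simp

lemma suppP_cons (p : ℕ) (n : ℤ) (hn : 0 ≤ n) (c : ℕ) (R : List ℕ) (k : ℕ)
    (hL : Nat.digits p (n.toNat + 1) = c :: R) (hk : R.length = k + 1) :
    suppP p n = (Tset p R k).map (addEmb (c : ℤ)) ∪ (Tset p R k).map (addEmb (-(c : ℤ))) := by
  rw [suppP, if_pos hn, hL]
  have hlen : (c :: R).length - 1 = k + 1 := by simp [hk]
  dsimp only
  rw [hlen]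
  ext x
  simp only [Finset.mem_image, Finset.mem_union, Finset.mem_map, Finset.mem_univ, true_and,
    Tset, addEmb, Function.Embedding.coeFn_mk]
  constructor
  · rintro ⟨ε, rfl⟩
    rw [Fin.sum_univ_succ]
    simp only [List.getD_cons_succ, List.getD_cons_zero, Fin.val_succ, Fin.val_zero, pow_zero]
    cases h0 : ε 0
    · right
      refine ⟨tfun p R k (fun i => ε i.succ), ⟨_, rfl⟩, ?_⟩
      simp only [h0, Bool.false_eq_true, if_false, tfun]; ring
    · left
      refine ⟨tfun p R k (fun i => ε i.succ), ⟨_, rfl⟩, ?_⟩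
      simp only [h0, if_true, tfun]; ring
  · rintro (⟨t, ⟨δ, rfl⟩, rfl⟩ | ⟨t, ⟨δ, rfl⟩, rfl⟩)
    · exact ⟨Fin.cons true δ, by
        rw [Fin.sum_univ_succ]
        simp only [List.getD_cons_succ, List.getD_cons_zero, Fin.val_succ, Fin.val_zero,
          pow_zero, Fin.cons_zero, Fin.cons_succ, tfun, if_true]
        ring⟩
    · exact ⟨Fin.cons false δ, by
        rw [Fin.sum_univ_succ]
        simp only [List.getD_cons_succ, List.getD_cons_zero, Fin.val_succ, Fin.val_zero,
          pow_zero, Fin.cons_zero, Fin.cons_succ, tfun, Bool.false_eq_true, if_false]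
        ring⟩

lemma tfun_dvd (p : ℕ) (R : List ℕ) (k : ℕ) (δ : Fin k → Bool) :
    (p : ℤ) ∣ tfun p R k δ := by
  apply dvd_add
  · exact Dvd.dvd.mul_left (dvd_pow_self (p:ℤ) (Nat.succ_ne_zero k)) _
  · exact Finset.dvd_sum fun i _ => Dvd.dvd.mul_left (dvd_pow_self (p:ℤ) (Nat.succ_ne_zero i)) _

lemma tfun_ge (p : ℕ) (hp : 1 < p) (R : List ℕ) (k : ℕ) (hk : R.length = k + 1)
    (hdig : ∀ d ∈ R, d < p) (hlast : R.getD k 0 ≠ 0) (δ : Fin k → Bool) :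
    (p : ℤ) ≤ tfun p R k δ := by
  have hp0 : (0:ℤ) < p := by exact_mod_cast Nat.lt_of_lt_of_le Nat.zero_lt_one hp.le
  have hbound : ∀ i : Fin k, -((p:ℤ) - 1) * (p:ℤ) ^ ((i:ℕ)+1) ≤
      (if δ i then (1 : ℤ) else -1) * (R.getD (i:ℕ) 0 : ℤ) * (p : ℤ) ^ ((i : ℕ) + 1) := by
    intro i
    have hi : (i : ℕ) < R.length := by rw [hk]; exact Nat.lt_succ_of_lt i.isLt
    have hdi : (R.getD (i:ℕ) 0 : ℤ) ≤ (p:ℤ) - 1 := by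
      have hmem : R.getD (i:ℕ) 0 ∈ R := by
        rw [List.getD_eq_getElem _ _ hi]; exact List.getElem_mem hi
      have h := hdig _ hmem
      omega
    have hpow : (0:ℤ) < (p:ℤ) ^ ((i:ℕ)+1) := pow_pos hp0 _
    cases δ i <;> simp only [if_true, if_false, Bool.false_eq_true] <;> nlinarith [hpow,
      (Int.natCast_nonneg (R.getD (i:ℕ) 0))]
  have hsum : -((p:ℤ)^(k+1) - (p:ℤ)) ≤
      ∑ i : Fin k, (if δ i then (1 : ℤ) else -1) * (R.getD (i:ℕ) 0 : ℤ) * (p : ℤ) ^ ((i : ℕ) + 1) := by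
    have h1 : ∑ i : Fin k, -((p:ℤ) - 1) * (p:ℤ) ^ ((i:ℕ)+1) ≤ _ :=
      Finset.sum_le_sum (fun i _ => hbound i)
    refine le_trans (le_of_eq ?_) h1
    rw [Fin.sum_univ_eq_sum_range (fun i => -((p:ℤ) - 1) * (p:ℤ) ^ (i+1))]
    have : ∀ i ∈ Finset.range k, -((p:ℤ) - 1) * (p:ℤ) ^ (i+1) = (-(p:ℤ)) * (((p:ℤ) - 1) * (p:ℤ)^i) := by
      intro i _; ring
    rw [Finset.sum_congr rfl this, ← Finset.mul_sum, ← Finset.mul_sum, mul_comm ((p:ℤ)-1),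
      geom_sum_mul]
    ring
  have hlead : (1:ℤ) ≤ (R.getD k 0 : ℤ) := by exact_mod_cast Nat.one_le_iff_ne_zero.2 hlast
  have hpk : (0:ℤ) < (p:ℤ)^(k+1) := pow_pos hp0 _
  rw [tfun]
  nlinarith [hsum, hlead, hpk]

lemma Tset_disj (p : ℕ) (hp : p.Prime) (hp2 : 2 < p) (R : List ℕ) (k : ℕ) (c : ℤ)
    (h0 : 0 < c) (hcp : c < p) :
    Disjoint ((Tset p R k).map (addEmb c)) ((Tset p R k).map (addEmb (-c))) := by
  rw [Finset.disjoint_left]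
  rintro x hx hx'
  rw [Finset.mem_map] at hx hx'
  obtain ⟨t, ht, rfl⟩ := hx
  obtain ⟨t', ht', h⟩ := hx'
  simp only [Tset, Finset.mem_image, Finset.mem_univ, true_and] at ht ht'
  obtain ⟨δ, rfl⟩ := ht
  obtain ⟨δ', rfl⟩ := ht'
  simp only [addEmb, Function.Embedding.coeFn_mk] at h
  have hdvd : (p:ℤ) ∣ 2 * c := by
    have h1 := tfun_dvd p R k δ
    have h2 := tfun_dvd p R k δ'
    have : 2 * c = tfun p R k δ' - tfun p R k δ := by linarith
    rw [this]; exact dvd_sub h2 h1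
  have hpZ : Prime (p:ℤ) := Nat.prime_iff_prime_int.1 hp
  rcases hpZ.dvd_mul.1 hdvd with h2 | hc
  · have := Int.le_of_dvd (by norm_num) h2
    have : (3:ℤ) ≤ p := by exact_mod_cast hp2
    omega
  · have := Int.le_of_dvd h0 hc
    omega

/-- If `p > 2` is prime, `n ≥ 0` and the last base-`p` digit `a₀` of `n+1`
satisfies `1 < a₀ < p-1`, then, as multisets, `ext(n) = supp(n+1) + supp(n-1)`. -/
theorem ext_eq_of_middle_digit (p : ℕ) (hp : p.Prime) (hp2 : 2 < p) (n : ℤ) (hn : 0 ≤ n)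
    (h1 : 1 < (n + 1) % (p : ℤ)) (h2 : (n + 1) % (p : ℤ) < (p : ℤ) - 1) :
    extP p n = (suppP p (n + 1)).val + (suppP p (n - 1)).val := by
  set m : ℕ := n.toNat + 1 with hm_def
  set a : ℕ := m % p with ha_def
  set q : ℕ := m / p with hq_def
  have hmn : (m : ℤ) = n + 1 := by omega
  have hmod : (n + 1) % (p : ℤ) = (a : ℤ) := by rw [← hmn]; push_cast [ha_def]; rfl
  have ha2 : 2 ≤ a := by omega
  have hap : a + 2 ≤ p := by omega
  have hqm : m = p * q + a := by rw [hq_def, ha_def]; have := Nat.div_add_mod m p; omega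
  have hm2 : 2 ≤ m := by have := Nat.mod_le m p; omega
  have hn1 : 1 ≤ n := by omega
  have hp1 : 1 < p := by omega
  have hdm : Nat.digits p m = a :: Nat.digits p q :=
    Nat.digits_def' hp1 (by omega)
  have hmod1 : (m + 1) % p = a + 1 := by
    have : m + 1 = (a+1) + p * q := by omega
    rw [this, Nat.add_mul_mod_self_left, Nat.mod_eq_of_lt (by omega)]
  have hdiv1 : (m + 1) / p = q := by
    have : m + 1 = (a+1) + p * q := by omega
    rw [this, Nat.add_mul_div_left _ _ (by omega : 0 < p), Nat.div_eq_of_lt (by omega), Nat.zero_add]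
  have hdm1 : Nat.digits p (m + 1) = (a + 1) :: Nat.digits p q := by
    rw [Nat.digits_def' hp1 (by omega), hmod1, hdiv1]
  have hmod2 : (m - 1) % p = a - 1 := by
    have : m - 1 = (a-1) + p * q := by omega
    rw [this, Nat.add_mul_mod_self_left, Nat.mod_eq_of_lt (by omega)]
  have hdiv2 : (m - 1) / p = q := by
    have : m - 1 = (a-1) + p * q := by omega
    rw [this, Nat.add_mul_div_left _ _ (by omega : 0 < p), Nat.div_eq_of_lt (by omega), Nat.zero_add]
  have hdm2 : Nat.digits p (m - 1) = (a - 1) :: Nat.digits p q := by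
    rw [Nat.digits_def' hp1 (by omega), hmod2, hdiv2]
  have e1 : (n + 1).toNat + 1 = m + 1 := by omega
  have e2 : (n - 1).toNat + 1 = m - 1 := by omega
  rcases Nat.eq_zero_or_pos q with hq0 | hqpos
  · -- base case : single digit
    rw [hq0, Nat.digits_zero] at hdm hdm1 hdm2
    have s0 : suppP p n = {(a : ℤ)} :=
      suppP_singleton p n hn a (by rw [← hm_def]; exact hdm)
    have s1 : suppP p (n + 1) = {((a + 1 : ℕ) : ℤ)} :=
      suppP_singleton p (n + 1) (by omega) (a + 1) (by rw [e1]; exact hdm1)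
    have s2 : suppP p (n - 1) = {((a - 1 : ℕ) : ℤ)} :=
      suppP_singleton p (n - 1) (by omega) (a - 1) (by rw [e2]; exact hdm2)
    have hc1 : ((a + 1 : ℕ) : ℤ) = (a : ℤ) + 1 := by omega
    have hc2 : ((a - 1 : ℕ) : ℤ) = (a : ℤ) - 1 := by omega
    rw [extP, s0, s1, s2, hc1, hc2]
    have h2a : (2 : ℤ) ≤ (a : ℤ) := by omega
    simp [Multiset.filter_singleton, h2a]
  · -- main case
    set R : List ℕ := Nat.digits p q with hR_def
    have hne : R ≠ [] := Nat.digits_ne_nil_iff_ne_zero.2 (by omega)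
    obtain ⟨k, hk⟩ : ∃ k, R.length = k + 1 := by
      cases hlen : R.length with
      | zero => exact absurd (List.length_eq_zero_iff.1 hlen) hne
      | succ k => exact ⟨k, rfl⟩
    have hdig : ∀ d ∈ R, d < p := fun d hd => Nat.digits_lt_base hp1 hd
    have hlast : R.getD k 0 ≠ 0 := by
      have h' := Nat.getLast_digit_ne_zero p (show q ≠ 0 by omega)
      rw [List.getD_eq_getElem _ _ (by omega)]
      rw [List.getLast_eq_getElem] at h'
      simpa [← hR_def, show R.length - 1 = k by omega] using h'
    set T : Finset ℤ := Tset p R k with hT_def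
    have s0 : suppP p n = T.map (addEmb (a : ℤ)) ∪ T.map (addEmb (-(a : ℤ))) :=
      suppP_cons p n hn a R k (by rw [← hm_def]; exact hdm) hk
    have s1 : suppP p (n + 1) =
        T.map (addEmb ((a + 1 : ℕ) : ℤ)) ∪ T.map (addEmb (-((a + 1 : ℕ) : ℤ))) :=
      suppP_cons p (n + 1) (by omega) (a + 1) R k (by rw [e1]; exact hdm1) hk
    have s2 : suppP p (n - 1) =
        T.map (addEmb ((a - 1 : ℕ) : ℤ)) ∪ T.map (addEmb (-((a - 1 : ℕ) : ℤ))) :=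
      suppP_cons p (n - 1) (by omega) (a - 1) R k (by rw [e2]; exact hdm2) hk
    have val_eq : ∀ c : ℤ, 0 < c → c < p →
        (T.map (addEmb c) ∪ T.map (addEmb (-c))).val =
          T.val.map (fun x => x + c) + T.val.map (fun x => x + (-c)) := by
      intro c hc0 hcp
      rw [← Finset.disjUnion_eq_union _ _ (Tset_disj p hp hp2 R k c hc0 hcp)]
      rfl
    have w0 : (suppP p n).val =
        T.val.map (fun x => x + (a : ℤ)) + T.val.map (fun x => x + (-(a : ℤ))) := by
      rw [s0, val_eq _ (by omega) (by omega)]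
    have w1 : (suppP p (n + 1)).val =
        T.val.map (fun x => x + ((a + 1 : ℕ) : ℤ)) +
          T.val.map (fun x => x + (-((a + 1 : ℕ) : ℤ))) := by
      rw [s1, val_eq _ (by omega) (by omega)]
    have w2 : (suppP p (n - 1)).val =
        T.val.map (fun x => x + ((a - 1 : ℕ) : ℤ)) +
          T.val.map (fun x => x + (-((a - 1 : ℕ) : ℤ))) := by
      rw [s2, val_eq _ (by omega) (by omega)]
    have hT_ge : ∀ t ∈ T.val, (p : ℤ) ≤ t := by
      intro t ht
      rw [← Finset.mem_def, hT_def, Tset, Finset.mem_image] at ht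
      obtain ⟨δ, -, rfl⟩ := ht
      exact tfun_ge p hp1 R k hk hdig hlast δ
    have hall : ∀ x ∈ (suppP p n).val, (2 : ℤ) ≤ x := by
      intro x hx
      rw [w0, Multiset.mem_add] at hx
      rcases hx with hx | hx <;> rw [Multiset.mem_map] at hx <;>
        obtain ⟨t, ht, rfl⟩ := hx <;> have := hT_ge t ht <;> omega
    rw [extP, Multiset.filter_eq_self.2 hall, w0, w1, w2, Multiset.map_add, Multiset.map_add,
      Multiset.map_map, Multiset.map_map, Multiset.map_map, Multiset.map_map]
    have f1 : ((fun x : ℤ => x + 1) ∘ (fun x : ℤ => x + (a : ℤ))) =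
        fun x : ℤ => x + ((a + 1 : ℕ) : ℤ) := by funext x; simp; omega
    have f2 : ((fun x : ℤ => x + 1) ∘ (fun x : ℤ => x + (-(a : ℤ)))) =
        fun x : ℤ => x + (-((a - 1 : ℕ) : ℤ)) := by funext x; simp; omega
    have f3 : ((fun x : ℤ => x - 1) ∘ (fun x : ℤ => x + (a : ℤ))) =
        fun x : ℤ => x + ((a - 1 : ℕ) : ℤ) := by funext x; simp; omega
    have f4 : ((fun x : ℤ => x - 1) ∘ (fun x : ℤ => x + (-(a : ℤ)))) =
        fun x : ℤ => x + (-((a + 1 : ℕ) : ℤ)) := by funext x; simp; omega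
    rw [f1, f2, f3, f4]
    abel
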